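/- arXiv:2411.12944 — 2 statements merged into one kernel-verified Lean document; each statement's English description precedes it below -/
import Mathlib

section
/- (Corollary 5.) Under Assumption 1 and the stratification setup, take the working models to be X = S with μ_jk(S) = E_jk(Y^(j) | S) and μ_kj(S) = E_jk(Y^(k) | S). Then Σ_ps = Σ_saipw, i.e., the 2×2 matrix diag( E_jk[Var_jk(Y^(j)|S)/π_j(S)], E_jk[Var_jk(Y^(k)|S)/π_k(S)] ) + Γ_jk equals diag( E_jk[(ε_jk−δ_jk)²/π_j(S)], E_jk[(ε_kj−δ_kj)²/π_k(S)] ) + Λ_jk, where ε_jk = Y^(j) − μ_jk(S), ε_kj = Y^(k) − μ_kj(S), δ_jk = E_jk[ε_jk] = 0, δ_kj = E_jk[ε_kj] = 0, Γ_jk is the ECE-conditional covariance matrix of (E_jk(Y^(j)|S), E_jk(Y^(k)|S)), and Λ_jk has diagonal entries λ_jk = Var_jk(Y^(j)) − Var_jk(ε_jk), λ_kj = Var_jk(Y^(k)) − Var_jk(ε_kj) and off-diagonal entries c_jk = Cov_jk(Y^(j),Y^(k)) − Cov_jk(ε_jk, ε_kj). -/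
open MeasureTheory ProbabilityTheory Filter Set

noncomputable section

/-- Covariance of two real-valued random variables under the measure `μ`. -/
def cov {Ω : Type*} [MeasurableSpace Ω] (μ : Measure Ω) (f g : Ω → ℝ) : ℝ :=
  ∫ ω, (f ω - ∫ x, f x ∂μ) * (g ω - ∫ x, g x ∂μ) ∂μ

/-- The conditional mean `E_μ(f | S)` of `f` given a finitely-valued variable `S`,
as a function on the sample space. -/
def condMeanOn {Ω 𝓢 : Type*} [MeasurableSpace Ω] (μ : Measure Ω) (S : Ω → 𝓢) (f : Ω → ℝ) :
    Ω → ℝ :=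
  fun ω => ∫ x, f x ∂μ[|{ω' | S ω' = S ω}]

/-- The conditional variance `Var_μ(f | S)` of `f` given `S`, as a function on the
sample space. -/
def condVarOn {Ω 𝓢 : Type*} [MeasurableSpace Ω] (μ : Measure Ω) (S : Ω → 𝓢) (f : Ω → ℝ) :
    Ω → ℝ :=
  fun ω => ProbabilityTheory.variance f μ[|{ω' | S ω' = S ω}]

/-- The conditional covariance `Cov_μ(f, g | S)` of `f` and `g` given `S`, as a function on
the sample space. -/
def condCovOn {Ω 𝓢 : Type*} [MeasurableSpace Ω] (μ : Measure Ω) (S : Ω → 𝓢) (f g : Ω → ℝ) :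
    Ω → ℝ :=
  fun ω => cov μ[|{ω' | S ω' = S ω}] f g

namespace Stmt16Aux

variable {Ω : Type*} [MeasurableSpace Ω] {μ : Measure Ω}

lemma l2_mul_integrable {f g : Ω → ℝ} (hf : MemLp f 2 μ) (hg : MemLp g 2 μ) :
    Integrable (fun ω => f ω * g ω) μ := by
  rw [← memLp_one_iff_integrable]
  have h := hg.smul (φ := f) hf (r := 1) (hpqr := ⟨by rw [ENNReal.inv_two_add_inv_two, inv_one]⟩)
  simpa [smul_eq_mul, Pi.mul_def] using h

lemma cond_zero_of_null {B : Set Ω} (h0 : μ B = 0) : μ[|B] = 0 := by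
  rw [ProbabilityTheory.cond, Measure.restrict_eq_zero.mpr h0, smul_zero]

lemma memℒp_cond [IsFiniteMeasure μ] (B : Set Ω) {f : Ω → ℝ} (hf : MemLp f 2 μ) :
    MemLp f 2 μ[|B] := by
  by_cases h0 : μ B = 0
  · rw [cond_zero_of_null h0]
    exact ⟨aestronglyMeasurable_zero_measure f, by simp [eLpNorm_measure_zero]⟩
  · rw [ProbabilityTheory.cond]
    exact (hf.restrict B).smul_measure (by simp [h0])


lemma indicator_sum_rep {𝓢 : Type*} [Fintype 𝓢] [DecidableEq 𝓢] (S : Ω → 𝓢) (F : 𝓢 → Ω → ℝ)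
    (ω : Ω) : F (S ω) ω = ∑ s, (S ⁻¹' {s}).indicator (F s) ω := by
  rw [Finset.sum_eq_single (S ω)]
  · exact (Set.indicator_of_mem (by simp : ω ∈ S ⁻¹' {S ω}) (F (S ω))).symm
  · intro b _ hb
    exact Set.indicator_of_notMem (by simpa using fun h => hb h.symm) (F b)
  · intro h; exact absurd (Finset.mem_univ _) h

lemma integrable_comp {𝓢 : Type*} [Fintype 𝓢] [MeasurableSpace 𝓢] [MeasurableSingletonClass 𝓢]
    {S : Ω → 𝓢} (hS : Measurable S) (F : 𝓢 → Ω → ℝ) (hF : ∀ s, Integrable (F s) μ) :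
    Integrable (fun ω => F (S ω) ω) μ := by
  classical
  have hrep : (fun ω => F (S ω) ω) = fun ω => ∑ s, (S ⁻¹' {s}).indicator (F s) ω :=
    funext (indicator_sum_rep S F)
  rw [hrep]
  exact integrable_finset_sum _ fun s _ => (hF s).indicator (hS (measurableSet_singleton s))

lemma setInt [IsFiniteMeasure μ] (B : Set Ω) (f : Ω → ℝ) :
    ∫ ω in B, f ω ∂μ = (μ B).toReal * ∫ x, f x ∂μ[|B] := by
  by_cases h0 : μ B = 0
  · have hr : μ.restrict B = 0 := Measure.restrict_eq_zero.mpr h0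
    simp [hr, h0]
  · rw [ProbabilityTheory.cond, integral_smul_measure, ENNReal.toReal_inv, smul_eq_mul,
      ← mul_assoc, mul_inv_cancel₀ (ENNReal.toReal_ne_zero.mpr ⟨h0, measure_ne_top μ B⟩), one_mul]

lemma key [IsFiniteMeasure μ] {𝓢 : Type*} [Fintype 𝓢] [MeasurableSpace 𝓢]
    [MeasurableSingletonClass 𝓢] {S : Ω → 𝓢} (hS : Measurable S) (F : 𝓢 → Ω → ℝ)
    (hF : ∀ s, Integrable (F s) μ) :
    ∫ ω, F (S ω) ω ∂μ
      = ∑ s, (μ (S ⁻¹' {s})).toReal * ∫ x, F s x ∂μ[|S ⁻¹' {s}] := by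
  classical
  have hrep : (fun ω => F (S ω) ω) = fun ω => ∑ s, (S ⁻¹' {s}).indicator (F s) ω :=
    funext (indicator_sum_rep S F)
  rw [hrep, integral_finset_sum _ fun s _ => (hF s).indicator (hS (measurableSet_singleton s))]
  refine Finset.sum_congr rfl fun s _ => ?_
  rw [integral_indicator (hS (measurableSet_singleton s)), setInt]

lemma memℒp_comp [IsFiniteMeasure μ] {𝓢 : Type*} [Fintype 𝓢] [MeasurableSpace 𝓢]
    [MeasurableSingletonClass 𝓢] {S : Ω → 𝓢} (hS : Measurable S) (c : 𝓢 → ℝ) :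
    MemLp (fun ω => c (S ω)) 2 μ := by
  classical
  have hrep : (fun ω => c (S ω)) = fun ω => ∑ s, (S ⁻¹' {s}).indicator (fun _ => c s) ω :=
    funext (indicator_sum_rep S (fun s _ => c s))
  have h := memLp_finset_sum' (μ := μ) Finset.univ fun s (_ : s ∈ Finset.univ) =>
    memLp_indicator_const 2 (hS (measurableSet_singleton s)) (c s) (Or.inr (measure_ne_top μ _))
  have hrep' : (fun ω => c (S ω))
      = ∑ s : 𝓢, (S ⁻¹' {s}).indicator (fun _ => c s) := by
    funext ω
    rw [Finset.sum_apply]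
    exact indicator_sum_rep S (fun s _ => c s) ω
  rw [hrep']
  exact h

lemma pconst [IsFiniteMeasure μ] (B : Set Ω) (r : ℝ) :
    (μ B).toReal * ∫ _x, r ∂μ[|B] = (μ B).toReal * r := by
  by_cases h0 : μ B = 0
  · simp [h0]
  · haveI := cond_isProbabilityMeasure (μ := μ) h0
    rw [integral_const, probReal_univ]
    simp

lemma var_eq [IsProbabilityMeasure μ] {f : Ω → ℝ} (hf : MemLp f 2 μ) :
    variance f μ = (∫ ω, f ω * f ω ∂μ) - (∫ ω, f ω ∂μ) ^ 2 := by
  rw [variance_eq_sub hf]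
  congr 1
  exact integral_congr_ae (Eventually.of_forall fun ω => by simp [pow_two])

lemma expand_int [IsProbabilityMeasure μ] {f g : Ω → ℝ} (hf : MemLp f 2 μ) (hg : MemLp g 2 μ)
    (a b : ℝ) :
    ∫ ω, (f ω - a) * (g ω - b) ∂μ
      = (∫ ω, f ω * g ω ∂μ) - b * (∫ ω, f ω ∂μ) - a * (∫ ω, g ω ∂μ) + a * b := by
  have hif : Integrable f μ := hf.integrable one_le_two
  have hig : Integrable g μ := hg.integrable one_le_two
  have hifg : Integrable (fun ω => f ω * g ω) μ := l2_mul_integrable hf hg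
  have hexp : ∀ ω, (f ω - a) * (g ω - b) = f ω * g ω - b * f ω - a * g ω + a * b :=
    fun ω => by ring
  have i1 : Integrable (fun ω => f ω * g ω - b * f ω) μ := hifg.sub (hif.const_mul b)
  have i2 : Integrable (fun ω => f ω * g ω - b * f ω - a * g ω) μ := i1.sub (hig.const_mul a)
  simp only [hexp]
  rw [integral_add i2 (integrable_const _), integral_sub i1 (hig.const_mul a),
    integral_sub hifg (hif.const_mul b), integral_const_mul, integral_const_mul, integral_const]
  simp [measure_univ]

lemma cov_eq [IsProbabilityMeasure μ] {f g : Ω → ℝ} (hf : MemLp f 2 μ) (hg : MemLp g 2 μ) :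
    cov μ f g = (∫ ω, f ω * g ω ∂μ) - (∫ ω, f ω ∂μ) * (∫ ω, g ω ∂μ) := by
  unfold cov; rw [expand_int hf hg]
  ring


section Decomp

variable {𝓢 : Type*} [Fintype 𝓢] [MeasurableSpace 𝓢] [MeasurableSingletonClass 𝓢] {S : Ω → 𝓢}

lemma integrable_condMeanOn [IsFiniteMeasure μ] (hS : Measurable S) (f : Ω → ℝ) :
    Integrable (condMeanOn μ S f) μ :=
  integrable_comp hS (fun s _ => ∫ y, f y ∂μ[|S ⁻¹' {s}]) (fun _ => integrable_const _)

lemma memℒp_condMeanOn [IsFiniteMeasure μ] (hS : Measurable S) (f : Ω → ℝ) :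
    MemLp (condMeanOn μ S f) 2 μ :=
  memℒp_comp hS (fun s => ∫ y, f y ∂μ[|S ⁻¹' {s}])

lemma int_condMeanOn [IsProbabilityMeasure μ] (hS : Measurable S) {f : Ω → ℝ}
    (hf : Integrable f μ) :
    ∫ ω, condMeanOn μ S f ω ∂μ = ∫ ω, f ω ∂μ := by
  have h1 : ∫ ω, condMeanOn μ S f ω ∂μ
      = ∑ s, (μ (S ⁻¹' {s})).toReal * ∫ _x, (∫ y, f y ∂μ[|S ⁻¹' {s}]) ∂μ[|S ⁻¹' {s}] :=
    key hS (fun s _ => ∫ y, f y ∂μ[|S ⁻¹' {s}]) (fun _ => integrable_const _)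
  have h2 : ∫ ω, f ω ∂μ = ∑ s, (μ (S ⁻¹' {s})).toReal * ∫ y, f y ∂μ[|S ⁻¹' {s}] :=
    key hS (fun _ x => f x) (fun _ => hf)
  rw [h1, h2]
  exact Finset.sum_congr rfl fun s _ => pconst _ _

lemma cov_decomp [IsProbabilityMeasure μ] (hS : Measurable S) {f g : Ω → ℝ}
    (hf : MemLp f 2 μ) (hg : MemLp g 2 μ) :
    cov μ f g - cov μ (fun ω => f ω - condMeanOn μ S f ω) (fun ω => g ω - condMeanOn μ S g ω)
      = cov μ (condMeanOn μ S f) (condMeanOn μ S g) := by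
  classical
  set Mf : 𝓢 → ℝ := fun s => ∫ y, f y ∂μ[|S ⁻¹' {s}] with hMf
  set Mg : 𝓢 → ℝ := fun s => ∫ y, g y ∂μ[|S ⁻¹' {s}] with hMg
  have hmf : condMeanOn μ S f = fun ω => Mf (S ω) := rfl
  have hmg : condMeanOn μ S g = fun ω => Mg (S ω) := rfl
  have hintf : Integrable f μ := hf.integrable one_le_two
  have hintg : Integrable g μ := hg.integrable one_le_two
  have hMfL2 : MemLp (fun ω => Mf (S ω)) 2 μ := memℒp_comp hS Mf
  have hMgL2 : MemLp (fun ω => Mg (S ω)) 2 μ := memℒp_comp hS Mg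
  have hFL2 : MemLp (fun ω => f ω - Mf (S ω)) 2 μ := hf.sub hMfL2
  have hGL2 : MemLp (fun ω => g ω - Mg (S ω)) 2 μ := hg.sub hMgL2
  have hIf : ∫ ω, f ω ∂μ = ∑ s, (μ (S ⁻¹' {s})).toReal * Mf s :=
    key hS (fun _ x => f x) (fun _ => hintf)
  have hIg : ∫ ω, g ω ∂μ = ∑ s, (μ (S ⁻¹' {s})).toReal * Mg s :=
    key hS (fun _ x => g x) (fun _ => hintg)
  have hImf : ∫ ω, Mf (S ω) ∂μ = ∑ s, (μ (S ⁻¹' {s})).toReal * Mf s :=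
    (key hS (fun s _ => Mf s) (fun _ => integrable_const _)).trans
      (Finset.sum_congr rfl fun s _ => pconst _ _)
  have hImg : ∫ ω, Mg (S ω) ∂μ = ∑ s, (μ (S ⁻¹' {s})).toReal * Mg s :=
    (key hS (fun s _ => Mg s) (fun _ => integrable_const _)).trans
      (Finset.sum_congr rfl fun s _ => pconst _ _)
  have hIfg : ∫ ω, f ω * g ω ∂μ
      = ∑ s, (μ (S ⁻¹' {s})).toReal * ∫ x, f x * g x ∂μ[|S ⁻¹' {s}] :=
    key hS (fun _ x => f x * g x) (fun _ => l2_mul_integrable hf hg)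
  have hImfg : ∫ ω, Mf (S ω) * Mg (S ω) ∂μ
      = ∑ s, (μ (S ⁻¹' {s})).toReal * (Mf s * Mg s) :=
    (key hS (fun s _ => Mf s * Mg s) (fun _ => integrable_const _)).trans
      (Finset.sum_congr rfl fun s _ => pconst _ _)
  have hIcross : ∫ ω, (f ω - Mf (S ω)) * (g ω - Mg (S ω)) ∂μ
      = ∑ s, (μ (S ⁻¹' {s})).toReal
          * ((∫ x, f x * g x ∂μ[|S ⁻¹' {s}]) - Mf s * Mg s) := by
    have h := key hS (fun s x => (f x - Mf s) * (g x - Mg s))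
      (fun s => l2_mul_integrable (hf.sub (memLp_const _)) (hg.sub (memLp_const _)))
    rw [h]
    refine Finset.sum_congr rfl fun s _ => ?_
    by_cases h0 : μ (S ⁻¹' {s}) = 0
    · simp [h0]
    · haveI := cond_isProbabilityMeasure (μ := μ) h0
      have hfs : MemLp f 2 μ[|S ⁻¹' {s}] := memℒp_cond _ hf
      have hgs : MemLp g 2 μ[|S ⁻¹' {s}] := memℒp_cond _ hg
      rw [expand_int hfs hgs (Mf s) (Mg s)]
      simp only [hMf, hMg]
      ring
  rw [hmf, hmg, cov_eq hf hg, cov_eq hFL2 hGL2, cov_eq hMfL2 hMgL2]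
  have hsub : ∀ ω, f ω - (fun ω' => Mf (S ω')) ω = f ω - Mf (S ω) := fun _ => rfl
  rw [integral_sub hintf (integrable_comp hS (fun s _ => Mf s) (fun _ => integrable_const _)),
    integral_sub hintg (integrable_comp hS (fun s _ => Mg s) (fun _ => integrable_const _))]
  rw [hIf, hIg, hImf, hImg, hIfg, hImfg, hIcross]
  rw [sub_self, sub_self]
  simp only [mul_sub, Finset.sum_sub_distrib]
  ring

lemma var_decomp [IsProbabilityMeasure μ] (hS : Measurable S) {f : Ω → ℝ}
    (hf : MemLp f 2 μ) :
    variance f μ - variance (fun ω => f ω - condMeanOn μ S f ω) μ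
      = variance (condMeanOn μ S f) μ := by
  have h1 : variance f μ = cov μ f f := by rw [var_eq hf, cov_eq hf hf]; ring
  have hFL2 : MemLp (fun ω => f ω - condMeanOn μ S f ω) 2 μ :=
    hf.sub (memℒp_condMeanOn hS f)
  have h2 : variance (fun ω => f ω - condMeanOn μ S f ω) μ
      = cov μ (fun ω => f ω - condMeanOn μ S f ω) (fun ω => f ω - condMeanOn μ S f ω) := by
    rw [var_eq hFL2, cov_eq hFL2 hFL2]; ring
  have h3 : variance (condMeanOn μ S f) μ
      = cov μ (condMeanOn μ S f) (condMeanOn μ S f) := by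
    rw [var_eq (memℒp_condMeanOn hS f), cov_eq (memℒp_condMeanOn hS f) (memℒp_condMeanOn hS f)]
    ring
  rw [h1, h2, h3]
  exact cov_decomp hS hf hf

lemma condVar_int [IsProbabilityMeasure μ] (ρ : 𝓢 → ℝ) (hS : Measurable S) {f : Ω → ℝ}
    (hf : MemLp f 2 μ) :
    ∫ ω, condVarOn μ S f ω / ρ (S ω) ∂μ
      = ∫ ω, (f ω - condMeanOn μ S f ω) ^ 2 / ρ (S ω) ∂μ := by
  classical
  set Mf : 𝓢 → ℝ := fun s => ∫ y, f y ∂μ[|S ⁻¹' {s}] with hMf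
  have hL : ∫ ω, condVarOn μ S f ω / ρ (S ω) ∂μ
      = ∑ s, (μ (S ⁻¹' {s})).toReal * (variance f μ[|S ⁻¹' {s}] / ρ s) :=
    (key hS (fun s _ => variance f μ[|S ⁻¹' {s}] / ρ s) (fun _ => integrable_const _)).trans
      (Finset.sum_congr rfl fun s _ => pconst _ _)
  have hre : (fun ω => (f ω - condMeanOn μ S f ω) ^ 2 / ρ (S ω))
      = fun ω => (f ω - Mf (S ω)) * (f ω - Mf (S ω)) / ρ (S ω) := by
    funext ω
    rw [pow_two]
    rfl
  have hR : ∫ ω, (f ω - Mf (S ω)) * (f ω - Mf (S ω)) / ρ (S ω) ∂μ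
      = ∑ s, (μ (S ⁻¹' {s})).toReal
          * ((∫ x, (f x - Mf s) * (f x - Mf s) ∂μ[|S ⁻¹' {s}]) / ρ s) := by
    have h := key hS (fun s x => (f x - Mf s) * (f x - Mf s) / ρ s)
      (fun s => (l2_mul_integrable (hf.sub (memLp_const _)) (hf.sub (memLp_const _))).div_const _)
    rw [h]
    exact Finset.sum_congr rfl fun s _ => by rw [integral_div]
  rw [hre, hL, hR]
  refine Finset.sum_congr rfl fun s _ => ?_
  by_cases h0 : μ (S ⁻¹' {s}) = 0
  · simp [h0]
  · haveI := cond_isProbabilityMeasure (μ := μ) h0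
    have hfs : MemLp f 2 μ[|S ⁻¹' {s}] := memℒp_cond _ hf
    rw [expand_int hfs hfs (Mf s) (Mf s), var_eq hfs]
    simp only [hMf]
    ring

end Decomp

end Stmt16Aux

/-- Corollary 5: with working models μ_jk(S) = E_jk(Y^(j)|S) and
μ_kj(S) = E_jk(Y^(k)|S), the PS and SAIPW asymptotic covariance matrices coincide. -/
theorem stmt_16
    {Ω 𝓩 𝓦 : Type*} [MeasurableSpace Ω] [StandardBorelSpace Ω]
    [MeasurableSpace 𝓩] [MeasurableSpace 𝓦]
    (P : Measure Ω) [IsProbabilityMeasure P]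
    {J : ℕ} (Z : Ω → 𝓩) (W : Ω → 𝓦) (A : Ω → Fin J) (Y : Fin J → Ω → ℝ)
    (hZ : Measurable Z) (hW : Measurable W) (hA : Measurable A)
    (hY : ∀ m, Measurable (Y m)) (hY2 : ∀ m, MemLp (Y m) 2 P)
    (π : Fin J → 𝓩 → ℝ) (hπmeas : ∀ m, Measurable (π m))
    (hπ01 : ∀ m z, π m z ∈ Set.Icc (0:ℝ) 1)
    (hπsum : ∀ z, ∑ m, π m z = 1)
    -- Assumption 1: A ⟂ (W, Y^(1),…,Y^(J)) given Z
    (hCI : CondIndepFun (MeasurableSpace.comap Z inferInstance) hZ.comap_le A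
        (fun ω => (W ω, fun m => Y m ω)) P)
    -- Assumption 1: P(A = m | Z) = π_m(Z) a.s.
    (hprop : ∀ m : Fin J,
      (P[ Set.indicator {ω' | A ω' = m} (fun _ => (1:ℝ)) | MeasurableSpace.comap Z inferInstance])
        =ᵐ[P] fun ω => π m (Z ω))
    (j k : Fin J) (hjk : j ≠ k)
    -- the ECE event, with positive probability
    (ECE : Set Ω) (hECE : ECE = {ω | 0 < π j (Z ω) ∧ 0 < π k (Z ω)})
    (hECEpos : P ECE ≠ 0)
    -- stratification: S is a function of Z with finitely many values, and π_j(Z), π_k(Z)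
    -- are constant on every level of S
    {𝓢 : Type*} [Fintype 𝓢] [MeasurableSpace 𝓢] [MeasurableSingletonClass 𝓢]
    (S : Ω → 𝓢) (hSZ : ∃ g : 𝓩 → 𝓢, Measurable g ∧ ∀ ω, S ω = g (Z ω))
    (hconstj : ∀ ω ω', S ω = S ω' → π j (Z ω) = π j (Z ω'))
    (hconstk : ∀ ω ω', S ω = S ω' → π k (Z ω) = π k (Z ω'))
    -- working models: X = S with μ_jk(S) = E_jk(Y^(j)|S), μ_kj(S) = E_jk(Y^(k)|S);
    -- the corresponding residuals and δ's
    (εjk εkj : Ω → ℝ)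
    (hεjk : ∀ ω, εjk ω = Y j ω - condMeanOn P[|ECE] S (Y j) ω)
    (hεkj : ∀ ω, εkj ω = Y k ω - condMeanOn P[|ECE] S (Y k) ω)
    (δjk δkj : ℝ)
    (hδjk : δjk = ∫ ω, εjk ω ∂P[|ECE]) (hδkj : δkj = ∫ ω, εkj ω ∂P[|ECE])
    (lamjk lamkj : ℝ)
    (hlamjk : lamjk = variance (Y j) P[|ECE] - variance εjk P[|ECE])
    (hlamkj : lamkj = variance (Y k) P[|ECE] - variance εkj P[|ECE])
    (cjk : ℝ) (hcjk : cjk = cov P[|ECE] (Y j) (Y k) - cov P[|ECE] εjk εkj)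
    -- finiteness of the displayed conditional moments
    (hIntjε : Integrable (fun ω => (εjk ω - δjk) ^ 2 / π j (Z ω)) P[|ECE])
    (hIntkε : Integrable (fun ω => (εkj ω - δkj) ^ 2 / π k (Z ω)) P[|ECE])
    -- the matrices
    (Γjk Sps Ssaipw : Matrix (Fin 2) (Fin 2) ℝ)
    (hΓjk : Γjk =
      !![variance (condMeanOn P[|ECE] S (Y j)) P[|ECE],
           cov P[|ECE] (condMeanOn P[|ECE] S (Y j)) (condMeanOn P[|ECE] S (Y k));
         cov P[|ECE] (condMeanOn P[|ECE] S (Y j)) (condMeanOn P[|ECE] S (Y k)),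
           variance (condMeanOn P[|ECE] S (Y k)) P[|ECE]])
    (hSps : Sps =
      !![∫ ω, condVarOn P[|ECE] S (Y j) ω / π j (Z ω) ∂P[|ECE], 0;
         0, ∫ ω, condVarOn P[|ECE] S (Y k) ω / π k (Z ω) ∂P[|ECE]]
      + Γjk)
    (hSsaipw : Ssaipw =
      !![∫ ω, (εjk ω - δjk) ^ 2 / π j (Z ω) ∂P[|ECE], 0;
         0, ∫ ω, (εkj ω - δkj) ^ 2 / π k (Z ω) ∂P[|ECE]]
      + !![lamjk, cjk; cjk, lamkj]) :
    δjk = 0 ∧ δkj = 0 ∧ Sps = Ssaipw := by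
  classical
  obtain ⟨gz, hgm, hSg⟩ := hSZ
  have hS : Measurable S := by
    have h : S = fun ω => gz (Z ω) := funext hSg
    rw [h]; exact hgm.comp hZ
  haveI hQprob : IsProbabilityMeasure P[|ECE] := cond_isProbabilityMeasure hECEpos
  have hY2Q : ∀ m : Fin J, MemLp (Y m) 2 P[|ECE] := fun m => Stmt16Aux.memℒp_cond ECE (hY2 m)
  have hintY : ∀ m : Fin J, Integrable (Y m) P[|ECE] := fun m => (hY2Q m).integrable one_le_two
  have hεjk' : εjk = fun ω => Y j ω - condMeanOn P[|ECE] S (Y j) ω := funext hεjk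
  have hεkj' : εkj = fun ω => Y k ω - condMeanOn P[|ECE] S (Y k) ω := funext hεkj
  have hδjk0 : δjk = 0 := by
    rw [hδjk]
    simp only [hεjk']
    rw [integral_sub (hintY j) (Stmt16Aux.integrable_condMeanOn hS (Y j)),
      Stmt16Aux.int_condMeanOn hS (hintY j), sub_self]
  have hδkj0 : δkj = 0 := by
    rw [hδkj]
    simp only [hεkj']
    rw [integral_sub (hintY k) (Stmt16Aux.integrable_condMeanOn hS (Y k)),
      Stmt16Aux.int_condMeanOn hS (hintY k), sub_self]
  have E3 : variance (condMeanOn P[|ECE] S (Y j)) P[|ECE] = lamjk := by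
    rw [hlamjk, hεjk']
    exact (Stmt16Aux.var_decomp hS (hY2Q j)).symm
  have E4 : variance (condMeanOn P[|ECE] S (Y k)) P[|ECE] = lamkj := by
    rw [hlamkj, hεkj']
    exact (Stmt16Aux.var_decomp hS (hY2Q k)).symm
  have E5 : cov P[|ECE] (condMeanOn P[|ECE] S (Y j)) (condMeanOn P[|ECE] S (Y k)) = cjk := by
    rw [hcjk, hεjk', hεkj']
    exact (Stmt16Aux.cov_decomp hS (hY2Q j) (hY2Q k)).symm
  obtain ⟨ρj, hρj⟩ : ∃ ρ : 𝓢 → ℝ, ∀ ω, π j (Z ω) = ρ (S ω) := by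
    refine ⟨fun s => if h : ∃ ω, S ω = s then π j (Z h.choose) else 1, fun ω => ?_⟩
    have hex : ∃ ω', S ω' = S ω := ⟨ω, rfl⟩
    simp only [dif_pos hex]
    exact hconstj ω hex.choose hex.choose_spec.symm
  obtain ⟨ρk, hρk⟩ : ∃ ρ : 𝓢 → ℝ, ∀ ω, π k (Z ω) = ρ (S ω) := by
    refine ⟨fun s => if h : ∃ ω, S ω = s then π k (Z h.choose) else 1, fun ω => ?_⟩
    have hex : ∃ ω', S ω' = S ω := ⟨ω, rfl⟩
    simp only [dif_pos hex]
    exact hconstk ω hex.choose hex.choose_spec.symm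
  have E1 : ∫ ω, condVarOn P[|ECE] S (Y j) ω / π j (Z ω) ∂P[|ECE]
      = ∫ ω, (εjk ω - δjk) ^ 2 / π j (Z ω) ∂P[|ECE] := by
    have h1 : (fun ω => condVarOn P[|ECE] S (Y j) ω / π j (Z ω))
        = fun ω => condVarOn P[|ECE] S (Y j) ω / ρj (S ω) := funext fun ω => by rw [hρj ω]
    have h2 : (fun ω => (εjk ω - δjk) ^ 2 / π j (Z ω))
        = fun ω => (Y j ω - condMeanOn P[|ECE] S (Y j) ω) ^ 2 / ρj (S ω) :=
      funext fun ω => by rw [hδjk0, sub_zero, hεjk ω, hρj ω]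
    calc ∫ ω, condVarOn P[|ECE] S (Y j) ω / π j (Z ω) ∂P[|ECE]
        = ∫ ω, condVarOn P[|ECE] S (Y j) ω / ρj (S ω) ∂P[|ECE] := by rw [h1]
      _ = ∫ ω, (Y j ω - condMeanOn P[|ECE] S (Y j) ω) ^ 2 / ρj (S ω) ∂P[|ECE] :=
          Stmt16Aux.condVar_int ρj hS (hY2Q j)
      _ = ∫ ω, (εjk ω - δjk) ^ 2 / π j (Z ω) ∂P[|ECE] := by rw [h2]
  have E2 : ∫ ω, condVarOn P[|ECE] S (Y k) ω / π k (Z ω) ∂P[|ECE]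
      = ∫ ω, (εkj ω - δkj) ^ 2 / π k (Z ω) ∂P[|ECE] := by
    have h1 : (fun ω => condVarOn P[|ECE] S (Y k) ω / π k (Z ω))
        = fun ω => condVarOn P[|ECE] S (Y k) ω / ρk (S ω) := funext fun ω => by rw [hρk ω]
    have h2 : (fun ω => (εkj ω - δkj) ^ 2 / π k (Z ω))
        = fun ω => (Y k ω - condMeanOn P[|ECE] S (Y k) ω) ^ 2 / ρk (S ω) :=
      funext fun ω => by rw [hδkj0, sub_zero, hεkj ω, hρk ω]
    calc ∫ ω, condVarOn P[|ECE] S (Y k) ω / π k (Z ω) ∂P[|ECE]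
        = ∫ ω, condVarOn P[|ECE] S (Y k) ω / ρk (S ω) ∂P[|ECE] := by rw [h1]
      _ = ∫ ω, (Y k ω - condMeanOn P[|ECE] S (Y k) ω) ^ 2 / ρk (S ω) ∂P[|ECE] :=
          Stmt16Aux.condVar_int ρk hS (hY2Q k)
      _ = ∫ ω, (εkj ω - δkj) ^ 2 / π k (Z ω) ∂P[|ECE] := by rw [h2]
  refine ⟨hδjk0, hδkj0, ?_⟩
  rw [hSps, hSsaipw, hΓjk, E1, E2, E3, E4, E5]
end
end

section
/- (Corollary 6.) Under Assumption 1 and the stratification setup, assume condition (U): E_jk(ε_jk | S) = δ_jk and E_jk(ε_kj | S) = δ_kj almost surely. Then: (a) λ_jk = E_jk[λ_jk(S)] + Var_jk( E_jk(Y^(j)|S) ), where λ_jk(S) = Var_jk(Y^(j)|S) − Var_jk(ε_jk|S) (and analogously for λ_kj); (b) c_jk = E_jk[c_jk(S)] + Cov_jk( E_jk(Y^(j)|S), E_jk(Y^(k)|S) ), where c_jk(S) = Cov_jk(Y^(j),Y^(k)|S) − Cov_jk(ε_jk,ε_kj|S); (c) E_jk[(ε_jk − δ_jk)²/π_j(S)]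 = E_jk[Var_jk(ε_jk|S)/π_j(S)] (and analogously with k); consequently Σ_saipw = Σ_aps, where Σ_saipw = diag( E_jk[(ε_jk−δ_jk)²/π_j(S)], E_jk[(ε_kj−δ_kj)²/π_k(S)] ) + Λ_jk with Λ_jk having diagonal (λ_jk, λ_kj) and off-diagonal entries c_jk, and Σ_aps = E_jk[ diag( Var_jk(ε_jk|S)/π_j(S), Var_jk(ε_kj|S)/π_k(S) ) + Λ_jk(S) ] + Γ_jk with Λ_jk(S) having diagonal (λ_jk(S), λ_kj(S)) and off-diagonal c_jk(S), and Γ_jk the ECE-conditional covariance matrix of (E_jk(Y^(j)|S), E_jk(Y^(k)|S)). -/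
open MeasureTheory ProbabilityTheory Filter Set

noncomputable section

open scoped ENNReal NNReal

set_option linter.unusedSectionVars false

section Helpers
variable {Ω : Type*} [MeasurableSpace Ω] {Q : Measure Ω}

lemma memℒp_cond' [IsFiniteMeasure Q] {f : Ω → ℝ} {p : ℝ≥0∞}
    (hf : MemLp f p Q) (A : Set Ω) : MemLp f p Q[|A] := by
  by_cases h : Q A = 0
  · have hz : Q[|A] = 0 := by
      simp [ProbabilityTheory.cond, Measure.restrict_eq_zero.2 h]
    rw [hz]
    exact ⟨hf.1.mono_measure (Measure.zero_le Q), by simp [eLpNorm_measure_zero]⟩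
  · exact (hf.restrict A).smul_measure (by simp [h])

lemma integrable_cond' [IsFiniteMeasure Q] {f : Ω → ℝ}
    (hf : Integrable f Q) (A : Set Ω) : Integrable f Q[|A] := by
  rw [← memLp_one_iff_integrable] at hf ⊢
  exact memℒp_cond' hf A

lemma cov_eq [IsProbabilityMeasure Q] {f g : Ω → ℝ}
    (hf : MemLp f 2 Q) (hg : MemLp g 2 Q) :
    cov Q f g = (∫ ω, f ω * g ω ∂Q) - (∫ ω, f ω ∂Q) * (∫ ω, g ω ∂Q) := by
  have hif : Integrable f Q := hf.integrable one_le_two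
  have hig : Integrable g Q := hg.integrable one_le_two
  have hifg : Integrable (fun ω => f ω * g ω) Q := by
    have h1 : Integrable (fun ω => (f ω + g ω) ^ 2) Q := (hf.add hg).integrable_sq
    have h2 : Integrable (fun ω => f ω ^ 2) Q := hf.integrable_sq
    have h3 : Integrable (fun ω => g ω ^ 2) Q := hg.integrable_sq
    have : (fun ω => f ω * g ω) = fun ω => (((f ω + g ω) ^ 2 - f ω ^ 2) - g ω ^ 2) / 2 := by
      funext ω; ring
    rw [this]
    exact ((h1.sub h2).sub h3).div_const 2
  set a := ∫ ω, f ω ∂Q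
  set b := ∫ ω, g ω ∂Q
  have : cov Q f g = ∫ ω, (f ω * g ω - a * g ω - b * f ω + a * b) ∂Q := by
    unfold cov; congr 1; funext ω; ring
  have I1 : Integrable (fun ω => f ω * g ω - a * g ω) Q := hifg.sub (hig.const_mul a)
  have I2 : Integrable (fun ω => f ω * g ω - a * g ω - b * f ω) Q := I1.sub (hif.const_mul b)
  rw [this, integral_add I2 (integrable_const _), integral_sub I1 (hif.const_mul b),
    integral_sub hifg (hig.const_mul a), integral_const_mul, integral_const_mul, integral_const]
  simp only [measure_univ, ENNReal.toReal_one, smul_eq_mul, one_mul, probReal_univ, mul_one]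
  ring

lemma var_eq_cov [IsProbabilityMeasure Q] {f : Ω → ℝ} (hf : MemLp f 2 Q) :
    variance f Q = cov Q f f := by
  rw [variance_eq_integral hf.aestronglyMeasurable.aemeasurable]
  unfold cov
  congr 1; funext ω; simp [sq]

lemma cov_zero_meas : cov (0 : Measure Ω) f g = 0 := by simp [cov]

end Helpers

section Helpers2
variable {Ω : Type*} [MeasurableSpace Ω] {Q : Measure Ω}

lemma int_mul {f g : Ω → ℝ} (hf : MemLp f 2 Q) (hg : MemLp g 2 Q) :
    Integrable (fun ω => f ω * g ω) Q := by
  have h1 : Integrable (fun ω => (f ω + g ω) ^ 2) Q := (hf.add hg).integrable_sq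
  have h2 : Integrable (fun ω => f ω ^ 2) Q := hf.integrable_sq
  have h3 : Integrable (fun ω => g ω ^ 2) Q := hg.integrable_sq
  have e : (fun ω => f ω * g ω) = fun ω => (((f ω + g ω) ^ 2 - f ω ^ 2) - g ω ^ 2) / 2 := by
    funext ω; ring
  rw [e]
  exact ((h1.sub h2).sub h3).div_const 2

lemma cov_const_left [IsProbabilityMeasure Q] {f g : Ω → ℝ} {c : ℝ}
    (h : f =ᵐ[Q] fun _ => c) : cov Q f g = 0 := by
  have hm : ∫ x, f x ∂Q = c := by rw [integral_congr_ae h, integral_const]; simp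
  unfold cov
  rw [hm, integral_congr_ae (g := fun _ => (0:ℝ)) (h.mono fun ω hω => by
    simp only [hω, sub_self, zero_mul])]
  simp

lemma var_eq_int_sq [IsProbabilityMeasure Q] {f : Ω → ℝ} (hf : MemLp f 2 Q) {c : ℝ}
    (hc : ∫ x, f x ∂Q = c) : ∫ ω, (f ω - c) ^ 2 ∂Q = variance f Q := by
  rw [variance_eq_integral hf.aestronglyMeasurable.aemeasurable, hc]

end Helpers2

section Partition
variable {Ω 𝓢 : Type*} [MeasurableSpace Ω] {Q : Measure Ω} [Fintype 𝓢] [MeasurableSpace 𝓢]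
  [MeasurableSingletonClass 𝓢] {S : Ω → 𝓢}

lemma lvl_meas (hS : Measurable S) (s : 𝓢) : MeasurableSet {ω' | S ω' = s} :=
  hS (measurableSet_singleton s)

lemma wcond [IsFiniteMeasure Q] (f : Ω → ℝ) (A : Set Ω) :
    (Q A).toReal * ∫ ω, f ω ∂Q[|A] = ∫ ω in A, f ω ∂Q := by
  rw [ProbabilityTheory.cond, integral_smul_measure]
  by_cases h : Q A = 0
  · simp [h, Measure.restrict_eq_zero.2 h]
  · rw [ENNReal.toReal_inv, smul_eq_mul, ← mul_assoc,
      mul_inv_cancel₀ (ENNReal.toReal_ne_zero.2 ⟨h, measure_ne_top _ _⟩), one_mul]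

lemma total_int [IsProbabilityMeasure Q] (hS : Measurable S) {f : Ω → ℝ}
    (hf : Integrable f Q) :
    ∫ ω, f ω ∂Q = ∑ s : 𝓢, (Q {ω' | S ω' = s}).toReal * ∫ ω, f ω ∂Q[|{ω' | S ω' = s}] := by
  have key : f = fun ω => ∑ s : 𝓢, Set.indicator {ω' | S ω' = s} f ω := by
    funext ω
    rw [Finset.sum_eq_single (S ω)]
    · exact (Set.indicator_of_mem (by simp) f).symm
    · intro s _ hs
      exact Set.indicator_of_notMem (by simpa using fun h => hs h.symm) f
    · simp
  conv_lhs => rw [key]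
  rw [integral_finset_sum _ (fun s _ => hf.indicator (lvl_meas hS s))]
  exact Finset.sum_congr rfl fun s _ => by
    rw [integral_indicator (lvl_meas hS s)]; exact (wcond f _).symm

lemma cond_ae_level (hS : Measurable S) (Q : Measure Ω) (s : 𝓢) :
    ∀ᵐ ω ∂Q[|{ω' | S ω' = s}], S ω = s := by
  rw [ae_iff]
  have he : {ω | ¬ S ω = s} = {ω' | S ω' = s}ᶜ := rfl
  rw [he, cond_apply (lvl_meas hS s)]
  simp

lemma int_funS_cond (hS : Measurable S) [IsFiniteMeasure Q] (g : 𝓢 → ℝ) (s : 𝓢)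
    (h : Q {ω' | S ω' = s} ≠ 0) :
    ∫ ω, g (S ω) ∂Q[|{ω' | S ω' = s}] = g s := by
  haveI := cond_isProbabilityMeasure (μ := Q) h
  rw [integral_congr_ae (g := fun _ => g s)
    ((cond_ae_level hS Q s).mono fun ω hω => by rw [hω])]
  simp

lemma memℒp_funS [IsFiniteMeasure Q] (hS : Measurable S) (g : 𝓢 → ℝ) {p : ℝ≥0∞} :
    MemLp (fun ω => g (S ω)) p Q := by
  refine MemLp.of_bound (((measurable_of_countable g).comp hS).aestronglyMeasurable)
    (∑ s : 𝓢, |g s|) (Eventually.of_forall fun ω => ?_)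
  rw [Real.norm_eq_abs]
  exact Finset.single_le_sum (f := fun s => |g s|) (fun s _ => abs_nonneg _) (Finset.mem_univ (S ω))

lemma integrable_funS [IsFiniteMeasure Q] (hS : Measurable S) (g : 𝓢 → ℝ) :
    Integrable (fun ω => g (S ω)) Q :=
  (memℒp_funS hS g (p := 1)).integrable le_rfl

lemma int_funS [IsProbabilityMeasure Q] (hS : Measurable S) (g : 𝓢 → ℝ) :
    ∫ ω, g (S ω) ∂Q = ∑ s : 𝓢, (Q {ω' | S ω' = s}).toReal * g s := by
  rw [total_int hS (integrable_funS hS g)]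
  refine Finset.sum_congr rfl fun s _ => ?_
  by_cases h : Q {ω' | S ω' = s} = 0
  · simp [h]
  · rw [int_funS_cond hS g s h]

lemma const_on_pos_level {mf : 𝓢 → ℝ} {c : ℝ} (hae : ∀ᵐ ω ∂Q, mf (S ω) = c)
    {s : 𝓢} (hs : Q {ω' | S ω' = s} ≠ 0) : mf s = c := by
  by_contra hne
  apply hs
  refine measure_mono_null ?_ (ae_iff.1 hae)
  intro ω hω
  simp only [Set.mem_setOf_eq] at hω ⊢
  rw [hω]; exact hne

lemma total_cov [IsProbabilityMeasure Q] (hS : Measurable S) {f g : Ω → ℝ}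
    (hf : MemLp f 2 Q) (hg : MemLp g 2 Q) :
    cov Q f g = (∑ s : 𝓢, (Q {ω' | S ω' = s}).toReal * cov Q[|{ω' | S ω' = s}] f g)
      + cov Q (condMeanOn Q S f) (condMeanOn Q S g) := by
  set mf : 𝓢 → ℝ := fun s => ∫ x, f x ∂Q[|{ω' | S ω' = s}] with hmf
  set mg : 𝓢 → ℝ := fun s => ∫ x, g x ∂Q[|{ω' | S ω' = s}] with hmg
  have hcmf : condMeanOn Q S f = fun ω => mf (S ω) := rfl
  have hcmg : condMeanOn Q S g = fun ω => mg (S ω) := rfl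
  have hifg : Integrable (fun ω => f ω * g ω) Q := int_mul hf hg
  have h1 : ∫ ω, f ω * g ω ∂Q = ∑ s : 𝓢, (Q {ω' | S ω' = s}).toReal *
      (cov Q[|{ω' | S ω' = s}] f g + mf s * mg s) := by
    rw [total_int hS hifg]
    refine Finset.sum_congr rfl fun s _ => ?_
    by_cases h : Q {ω' | S ω' = s} = 0
    · simp [h]
    · haveI := cond_isProbabilityMeasure (μ := Q) h
      rw [cov_eq (memℒp_cond' hf _) (memℒp_cond' hg _)]
      simp only [hmf, hmg]; ring
  have h2 : cov Q (condMeanOn Q S f) (condMeanOn Q S g)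
      = (∑ s : 𝓢, (Q {ω' | S ω' = s}).toReal * (mf s * mg s))
        - (∫ ω, f ω ∂Q) * (∫ ω, g ω ∂Q) := by
    rw [hcmf, hcmg, cov_eq (memℒp_funS hS mf) (memℒp_funS hS mg)]
    have e : (fun ω => mf (S ω) * mg (S ω)) = fun ω => (fun s => mf s * mg s) (S ω) := rfl
    rw [show (∫ ω, mf (S ω) * mg (S ω) ∂Q) = ∫ ω, (fun s => mf s * mg s) (S ω) ∂Q from rfl,
      int_funS hS (fun s => mf s * mg s), int_funS hS mf, int_funS hS mg,
      ← total_int hS (hf.integrable one_le_two), ← total_int hS (hg.integrable one_le_two)]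
  rw [cov_eq hf hg, h1, h2]
  simp only [mul_add, Finset.sum_add_distrib]
  ring

end Partition

section Partition2
variable {Ω 𝓢 : Type*} [MeasurableSpace Ω] {Q : Measure Ω} [Fintype 𝓢] [MeasurableSpace 𝓢]
  [MeasurableSingletonClass 𝓢] {S : Ω → 𝓢}

lemma var_ae_const [IsProbabilityMeasure Q] {f : Ω → ℝ} {c : ℝ} (hf : MemLp f 2 Q)
    (h : f =ᵐ[Q] fun _ => c) : variance f Q = 0 := by
  rw [var_eq_cov hf]; exact cov_const_left h

lemma total_cov' [IsProbabilityMeasure Q] (hS : Measurable S) {f g : Ω → ℝ}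
    (hf : MemLp f 2 Q) (hg : MemLp g 2 Q) :
    cov Q f g = (∫ ω, condCovOn Q S f g ω ∂Q)
      + cov Q (condMeanOn Q S f) (condMeanOn Q S g) := by
  rw [total_cov hS hf hg]
  congr 1
  exact (int_funS hS (fun s => cov Q[|{ω' | S ω' = s}] f g)).symm

lemma total_var' [IsProbabilityMeasure Q] (hS : Measurable S) {f : Ω → ℝ}
    (hf : MemLp f 2 Q) :
    variance f Q = (∫ ω, condVarOn Q S f ω ∂Q) + variance (condMeanOn Q S f) Q := by
  rw [var_eq_cov hf,
    var_eq_cov (show MemLp (condMeanOn Q S f) 2 Q from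
      memℒp_funS hS (fun s => ∫ x, f x ∂Q[|{ω' | S ω' = s}])),
    total_cov hS hf hf]
  congr 1
  rw [show (∫ ω, condVarOn Q S f ω ∂Q)
      = ∫ ω, (fun s => variance f Q[|{ω' | S ω' = s}]) (S ω) ∂Q from rfl,
    int_funS hS (fun s => variance f Q[|{ω' | S ω' = s}])]
  refine Finset.sum_congr rfl fun s _ => ?_
  by_cases h : Q {ω' | S ω' = s} = 0
  · simp [h]
  · haveI := cond_isProbabilityMeasure (μ := Q) h
    rw [var_eq_cov (memℒp_cond' hf _)]

end Partition2


/-- Corollary 6: under condition (U), the λ, c and weighted second-moment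
identities hold, and consequently Σ_saipw = Σ_aps. -/
theorem stmt_17
    {Ω 𝓩 𝓦 : Type*} [MeasurableSpace Ω] [StandardBorelSpace Ω]
    [MeasurableSpace 𝓩] [MeasurableSpace 𝓦]
    (P : Measure Ω) [IsProbabilityMeasure P]
    {J : ℕ} (Z : Ω → 𝓩) (W : Ω → 𝓦) (A : Ω → Fin J) (Y : Fin J → Ω → ℝ)
    (hZ : Measurable Z) (hW : Measurable W) (hA : Measurable A)
    (hY : ∀ m, Measurable (Y m)) (hY2 : ∀ m, MemLp (Y m) 2 P)
    (π : Fin J → 𝓩 → ℝ) (hπmeas : ∀ m, Measurable (π m))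
    (hπ01 : ∀ m z, π m z ∈ Set.Icc (0:ℝ) 1)
    (hπsum : ∀ z, ∑ m, π m z = 1)
    -- Assumption 1: A ⟂ (W, Y^(1),…,Y^(J)) given Z
    (hCI : CondIndepFun (MeasurableSpace.comap Z inferInstance) hZ.comap_le A
        (fun ω => (W ω, fun m => Y m ω)) P)
    -- Assumption 1: P(A = m | Z) = π_m(Z) a.s.
    (hprop : ∀ m : Fin J,
      (P[ Set.indicator {ω' | A ω' = m} (fun _ => (1:ℝ)) | MeasurableSpace.comap Z inferInstance])
        =ᵐ[P] fun ω => π m (Z ω))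
    (j k : Fin J) (hjk : j ≠ k)
    -- the ECE event, with positive probability
    (ECE : Set Ω) (hECE : ECE = {ω | 0 < π j (Z ω) ∧ 0 < π k (Z ω)})
    (hECEpos : P ECE ≠ 0)
    -- stratification: S is a function of Z with finitely many values, and π_j(Z), π_k(Z)
    -- are constant on every level of S
    {𝓢 : Type*} [Fintype 𝓢] [MeasurableSpace 𝓢] [MeasurableSingletonClass 𝓢]
    (S : Ω → 𝓢) (hSZ : ∃ g : 𝓩 → 𝓢, Measurable g ∧ ∀ ω, S ω = g (Z ω))
    (hconstj : ∀ ω ω', S ω = S ω' → π j (Z ω) = π j (Z ω'))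
    (hconstk : ∀ ω ω', S ω = S ω' → π k (Z ω) = π k (Z ω'))
    -- working model: a covariate sub-vector X of W and a function μjk of X
    {𝓧 : Type*} [MeasurableSpace 𝓧]
    (X : Ω → 𝓧) (hXW : ∃ g : 𝓦 → 𝓧, Measurable g ∧ ∀ ω, X ω = g (W ω))
    (μjk : 𝓧 → ℝ) (hμjkm : Measurable μjk) (hμjk2 : MemLp (fun ω => μjk (X ω)) 2 P)
    (μkj : 𝓧 → ℝ) (hμkjm : Measurable μkj) (hμkj2 : MemLp (fun ω => μkj (X ω)) 2 P)
    -- residuals, δ's, λ's and c_jk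
    (εjk εkj : Ω → ℝ)
    (hεjk : ∀ ω, εjk ω = Y j ω - μjk (X ω)) (hεkj : ∀ ω, εkj ω = Y k ω - μkj (X ω))
    (δjk δkj : ℝ)
    (hδjk : δjk = ∫ ω, εjk ω ∂P[|ECE]) (hδkj : δkj = ∫ ω, εkj ω ∂P[|ECE])
    (lamjk lamkj : ℝ)
    (hlamjk : lamjk = variance (Y j) P[|ECE] - variance εjk P[|ECE])
    (hlamkj : lamkj = variance (Y k) P[|ECE] - variance εkj P[|ECE])
    (cjk : ℝ) (hcjk : cjk = cov P[|ECE] (Y j) (Y k) - cov P[|ECE] εjk εkj)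
    -- condition (U)
    (hU1 : ∀ᵐ ω ∂P[|ECE], condMeanOn P[|ECE] S εjk ω = δjk)
    (hU2 : ∀ᵐ ω ∂P[|ECE], condMeanOn P[|ECE] S εkj ω = δkj)
    -- finiteness of the displayed conditional moments
    (hIntjε : Integrable (fun ω => (εjk ω - δjk) ^ 2 / π j (Z ω)) P[|ECE])
    (hIntkε : Integrable (fun ω => (εkj ω - δkj) ^ 2 / π k (Z ω)) P[|ECE])
    -- the matrices
    (Γjk Ssaipw Saps : Matrix (Fin 2) (Fin 2) ℝ)
    (hΓjk : Γjk =
      !![variance (condMeanOn P[|ECE] S (Y j)) P[|ECE],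
           cov P[|ECE] (condMeanOn P[|ECE] S (Y j)) (condMeanOn P[|ECE] S (Y k));
         cov P[|ECE] (condMeanOn P[|ECE] S (Y j)) (condMeanOn P[|ECE] S (Y k)),
           variance (condMeanOn P[|ECE] S (Y k)) P[|ECE]])
    (hSsaipw : Ssaipw =
      !![∫ ω, (εjk ω - δjk) ^ 2 / π j (Z ω) ∂P[|ECE], 0;
         0, ∫ ω, (εkj ω - δkj) ^ 2 / π k (Z ω) ∂P[|ECE]]
      + !![lamjk, cjk; cjk, lamkj])
    (hSaps : Saps =
      !![∫ ω, (condVarOn P[|ECE] S εjk ω / π j (Z ω)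
              + (condVarOn P[|ECE] S (Y j) ω - condVarOn P[|ECE] S εjk ω)) ∂P[|ECE],
           ∫ ω, (condCovOn P[|ECE] S (Y j) (Y k) ω - condCovOn P[|ECE] S εjk εkj ω) ∂P[|ECE];
         ∫ ω, (condCovOn P[|ECE] S (Y j) (Y k) ω - condCovOn P[|ECE] S εjk εkj ω) ∂P[|ECE],
           ∫ ω, (condVarOn P[|ECE] S εkj ω / π k (Z ω)
              + (condVarOn P[|ECE] S (Y k) ω - condVarOn P[|ECE] S εkj ω)) ∂P[|ECE]]
      + Γjk) :
    -- (a)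
    (lamjk = (∫ ω, (condVarOn P[|ECE] S (Y j) ω - condVarOn P[|ECE] S εjk ω) ∂P[|ECE])
        + variance (condMeanOn P[|ECE] S (Y j)) P[|ECE]
      ∧ lamkj = (∫ ω, (condVarOn P[|ECE] S (Y k) ω - condVarOn P[|ECE] S εkj ω) ∂P[|ECE])
        + variance (condMeanOn P[|ECE] S (Y k)) P[|ECE])
    -- (b)
    ∧ cjk = (∫ ω, (condCovOn P[|ECE] S (Y j) (Y k) ω - condCovOn P[|ECE] S εjk εkj ω) ∂P[|ECE])
        + cov P[|ECE] (condMeanOn P[|ECE] S (Y j)) (condMeanOn P[|ECE] S (Y k))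
    -- (c)
    ∧ ((∫ ω, (εjk ω - δjk) ^ 2 / π j (Z ω) ∂P[|ECE])
          = ∫ ω, condVarOn P[|ECE] S εjk ω / π j (Z ω) ∂P[|ECE]
      ∧ (∫ ω, (εkj ω - δkj) ^ 2 / π k (Z ω) ∂P[|ECE])
          = ∫ ω, condVarOn P[|ECE] S εkj ω / π k (Z ω) ∂P[|ECE])
    -- consequently
    ∧ Ssaipw = Saps := by
  classical
  -- setup
  haveI hQprob : IsProbabilityMeasure P[|ECE] := cond_isProbabilityMeasure hECEpos
  obtain ⟨gS, hgSm, hgS⟩ := hSZ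
  have hSmeas : Measurable S := by
    have : S = fun ω => gS (Z ω) := funext hgS
    rw [this]; exact hgSm.comp hZ
  set Q := P[|ECE] with hQ
  -- square integrability under Q
  have hYj2 : MemLp (Y j) 2 Q := memℒp_cond' (hY2 j) ECE
  have hYk2 : MemLp (Y k) 2 Q := memℒp_cond' (hY2 k) ECE
  have hε2 : MemLp εjk 2 Q := by
    have h0 : MemLp (fun ω => Y j ω - μjk (X ω)) 2 Q :=
      (memℒp_cond' (hY2 j) ECE).sub (memℒp_cond' hμjk2 ECE)
    have he : εjk = fun ω => Y j ω - μjk (X ω) := funext hεjk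
    rw [he]; exact h0
  have hεk2 : MemLp εkj 2 Q := by
    have h0 : MemLp (fun ω => Y k ω - μkj (X ω)) 2 Q :=
      (memℒp_cond' (hY2 k) ECE).sub (memℒp_cond' hμkj2 ECE)
    have he : εkj = fun ω => Y k ω - μkj (X ω) := funext hεkj
    rw [he]; exact h0
  -- π j (Z ·), π k (Z ·) as functions of S
  obtain ⟨pj, hpj⟩ : ∃ p : 𝓢 → ℝ, ∀ ω, π j (Z ω) = p (S ω) := by
    refine ⟨fun s => if h : ∃ ω0, S ω0 = s then π j (Z h.choose) else 1, fun ω => ?_⟩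
    have h : ∃ ω0, S ω0 = S ω := ⟨ω, rfl⟩
    simp only [dif_pos h]
    exact hconstj ω h.choose h.choose_spec.symm
  obtain ⟨pk, hpk⟩ : ∃ p : 𝓢 → ℝ, ∀ ω, π k (Z ω) = p (S ω) := by
    refine ⟨fun s => if h : ∃ ω0, S ω0 = s then π k (Z h.choose) else 1, fun ω => ?_⟩
    have h : ∃ ω0, S ω0 = S ω := ⟨ω, rfl⟩
    simp only [dif_pos h]
    exact hconstk ω h.choose h.choose_spec.symm
  -- integrabilities of strata functions
  have iVYj : Integrable (condVarOn Q S (Y j)) Q :=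
    integrable_funS hSmeas (fun s => variance (Y j) Q[|{ω' | S ω' = s}])
  have iVYk : Integrable (condVarOn Q S (Y k)) Q :=
    integrable_funS hSmeas (fun s => variance (Y k) Q[|{ω' | S ω' = s}])
  have iVεj : Integrable (condVarOn Q S εjk) Q :=
    integrable_funS hSmeas (fun s => variance εjk Q[|{ω' | S ω' = s}])
  have iVεk : Integrable (condVarOn Q S εkj) Q :=
    integrable_funS hSmeas (fun s => variance εkj Q[|{ω' | S ω' = s}])
  have iCY : Integrable (condCovOn Q S (Y j) (Y k)) Q :=
    integrable_funS hSmeas (fun s => cov Q[|{ω' | S ω' = s}] (Y j) (Y k))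
  have iCε : Integrable (condCovOn Q S εjk εkj) Q :=
    integrable_funS hSmeas (fun s => cov Q[|{ω' | S ω' = s}] εjk εkj)
  have iVπj : Integrable (fun ω => condVarOn Q S εjk ω / π j (Z ω)) Q := by
    have h0 : Integrable (fun ω => (fun s => variance εjk Q[|{ω' | S ω' = s}] / pj s) (S ω)) Q :=
      integrable_funS hSmeas (fun s => variance εjk Q[|{ω' | S ω' = s}] / pj s)
    exact h0.congr (Eventually.of_forall fun ω => by simp only [hpj ω, condVarOn])
  have iVπk : Integrable (fun ω => condVarOn Q S εkj ω / π k (Z ω)) Q := by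
    have h0 : Integrable (fun ω => (fun s => variance εkj Q[|{ω' | S ω' = s}] / pk s) (S ω)) Q :=
      integrable_funS hSmeas (fun s => variance εkj Q[|{ω' | S ω' = s}] / pk s)
    exact h0.congr (Eventually.of_forall fun ω => by simp only [hpk ω, condVarOn])
  -- part (a)
  have ha1 : lamjk = (∫ ω, (condVarOn Q S (Y j) ω - condVarOn Q S εjk ω) ∂Q)
      + variance (condMeanOn Q S (Y j)) Q := by
    rw [hlamjk, total_var' hSmeas hYj2, total_var' hSmeas hε2,
      var_ae_const (show MemLp (condMeanOn Q S εjk) 2 Q from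
        memℒp_funS hSmeas (fun s => ∫ x, εjk x ∂Q[|{ω' | S ω' = s}])) hU1,
      integral_sub iVYj iVεj]
    ring
  have ha2 : lamkj = (∫ ω, (condVarOn Q S (Y k) ω - condVarOn Q S εkj ω) ∂Q)
      + variance (condMeanOn Q S (Y k)) Q := by
    rw [hlamkj, total_var' hSmeas hYk2, total_var' hSmeas hεk2,
      var_ae_const (show MemLp (condMeanOn Q S εkj) 2 Q from
        memℒp_funS hSmeas (fun s => ∫ x, εkj x ∂Q[|{ω' | S ω' = s}])) hU2,
      integral_sub iVYk iVεk]
    ring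
  -- part (b)
  have hb : cjk = (∫ ω, (condCovOn Q S (Y j) (Y k) ω - condCovOn Q S εjk εkj ω) ∂Q)
      + cov Q (condMeanOn Q S (Y j)) (condMeanOn Q S (Y k)) := by
    rw [hcjk, total_cov' hSmeas hYj2 hYk2, total_cov' hSmeas hε2 hεk2,
      cov_const_left hU1, integral_sub iCY iCε]
    ring
  -- part (c)
  have hc1 : (∫ ω, (εjk ω - δjk) ^ 2 / π j (Z ω) ∂Q)
      = ∫ ω, condVarOn Q S εjk ω / π j (Z ω) ∂Q := by
    have hIj : Integrable (fun ω => (εjk ω - δjk) ^ 2 / pj (S ω)) Q :=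
      hIntjε.congr (Eventually.of_forall fun ω => by simp only [hpj ω, condVarOn])
    calc (∫ ω, (εjk ω - δjk) ^ 2 / π j (Z ω) ∂Q)
        = ∫ ω, (εjk ω - δjk) ^ 2 / pj (S ω) ∂Q :=
          integral_congr_ae (Eventually.of_forall fun ω => by simp only [hpj ω, condVarOn])
      _ = ∑ s : 𝓢, (Q {ω' | S ω' = s}).toReal
            * ∫ ω, (εjk ω - δjk) ^ 2 / pj (S ω) ∂Q[|{ω' | S ω' = s}] := total_int hSmeas hIj
      _ = ∑ s : 𝓢, (Q {ω' | S ω' = s}).toReal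
            * (fun s => variance εjk Q[|{ω' | S ω' = s}] / pj s) s := by
          refine Finset.sum_congr rfl fun s _ => ?_
          by_cases h : Q {ω' | S ω' = s} = 0
          · simp [h]
          · haveI := cond_isProbabilityMeasure (μ := Q) h
            have hmean : ∫ x, εjk x ∂Q[|{ω' | S ω' = s}] = δjk :=
              const_on_pos_level (mf := fun s => ∫ x, εjk x ∂Q[|{ω' | S ω' = s}]) hU1 h
            have e1 : ∫ ω, (εjk ω - δjk) ^ 2 / pj (S ω) ∂Q[|{ω' | S ω' = s}]
                = ∫ ω, (εjk ω - δjk) ^ 2 / pj s ∂Q[|{ω' | S ω' = s}] :=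
              integral_congr_ae ((cond_ae_level hSmeas Q s).mono fun ω hω => by
                simp only [hω])
            rw [e1, integral_div, var_eq_int_sq (memℒp_cond' hε2 _) hmean]
      _ = ∫ ω, (fun s => variance εjk Q[|{ω' | S ω' = s}] / pj s) (S ω) ∂Q :=
          (int_funS hSmeas (fun s => variance εjk Q[|{ω' | S ω' = s}] / pj s)).symm
      _ = ∫ ω, condVarOn Q S εjk ω / π j (Z ω) ∂Q :=
          integral_congr_ae (Eventually.of_forall fun ω => by simp only [hpj ω, condVarOn])
  have hc2 : (∫ ω, (εkj ω - δkj) ^ 2 / π k (Z ω) ∂Q)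
      = ∫ ω, condVarOn Q S εkj ω / π k (Z ω) ∂Q := by
    have hIk : Integrable (fun ω => (εkj ω - δkj) ^ 2 / pk (S ω)) Q :=
      hIntkε.congr (Eventually.of_forall fun ω => by simp only [hpk ω, condVarOn])
    calc (∫ ω, (εkj ω - δkj) ^ 2 / π k (Z ω) ∂Q)
        = ∫ ω, (εkj ω - δkj) ^ 2 / pk (S ω) ∂Q :=
          integral_congr_ae (Eventually.of_forall fun ω => by simp only [hpk ω, condVarOn])
      _ = ∑ s : 𝓢, (Q {ω' | S ω' = s}).toReal
            * ∫ ω, (εkj ω - δkj) ^ 2 / pk (S ω) ∂Q[|{ω' | S ω' = s}] := total_int hSmeas hIk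
      _ = ∑ s : 𝓢, (Q {ω' | S ω' = s}).toReal
            * (fun s => variance εkj Q[|{ω' | S ω' = s}] / pk s) s := by
          refine Finset.sum_congr rfl fun s _ => ?_
          by_cases h : Q {ω' | S ω' = s} = 0
          · simp [h]
          · haveI := cond_isProbabilityMeasure (μ := Q) h
            have hmean : ∫ x, εkj x ∂Q[|{ω' | S ω' = s}] = δkj :=
              const_on_pos_level (mf := fun s => ∫ x, εkj x ∂Q[|{ω' | S ω' = s}]) hU2 h
            have e1 : ∫ ω, (εkj ω - δkj) ^ 2 / pk (S ω) ∂Q[|{ω' | S ω' = s}]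
                = ∫ ω, (εkj ω - δkj) ^ 2 / pk s ∂Q[|{ω' | S ω' = s}] :=
              integral_congr_ae ((cond_ae_level hSmeas Q s).mono fun ω hω => by
                simp only [hω])
            rw [e1, integral_div, var_eq_int_sq (memℒp_cond' hεk2 _) hmean]
      _ = ∫ ω, (fun s => variance εkj Q[|{ω' | S ω' = s}] / pk s) (S ω) ∂Q :=
          (int_funS hSmeas (fun s => variance εkj Q[|{ω' | S ω' = s}] / pk s)).symm
      _ = ∫ ω, condVarOn Q S εkj ω / π k (Z ω) ∂Q :=
          integral_congr_ae (Eventually.of_forall fun ω => by simp only [hpk ω, condVarOn])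
  refine ⟨⟨ha1, ha2⟩, hb, ⟨hc1, hc2⟩, ?_⟩
  -- the matrix identity
  have hsplit1 : ∫ ω, (condVarOn Q S εjk ω / π j (Z ω)
        + (condVarOn Q S (Y j) ω - condVarOn Q S εjk ω)) ∂Q
      = (∫ ω, condVarOn Q S εjk ω / π j (Z ω) ∂Q)
        + ∫ ω, (condVarOn Q S (Y j) ω - condVarOn Q S εjk ω) ∂Q :=
    integral_add iVπj (iVYj.sub iVεj)
  have hsplit2 : ∫ ω, (condVarOn Q S εkj ω / π k (Z ω)
        + (condVarOn Q S (Y k) ω - condVarOn Q S εkj ω)) ∂Q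
      = (∫ ω, condVarOn Q S εkj ω / π k (Z ω) ∂Q)
        + ∫ ω, (condVarOn Q S (Y k) ω - condVarOn Q S εkj ω) ∂Q :=
    integral_add iVπk (iVYk.sub iVεk)
  rw [hSsaipw, hSaps, hΓjk, hc1, hc2, ha1, ha2, hb, hsplit1, hsplit2]
  ext i i'
  fin_cases i <;> fin_cases i' <;>
    simp [Matrix.add_apply] <;> ring
end
end
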